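/- Let 0 < h < 1/4 and g(x) = 1/x - (1-x)(1-√(1-4hx))/(2hx^2), with iterates g^{∘n}. Then the limit Π(x) = lim_{n→∞} (g^{∘n}(x) - g^{∘n}(0)) / (g^{∘n})'(0) exists for x ∈ [0,1) and equals (1/√(1-4h)) · (1 - (1-x)·((√(1-4h)+1)/(√(1-4h)+√(1-4hx)))²). -/

import Mathlib

set_option maxHeartbeats 1600000


/-- The offspring generating function `g_λ`, extended continuously at `0` by `g(0) = 1-h`. -/
noncomputable def gGen (h : ℝ) (x : ℝ) : ℝ :=
  if x = 0 then 1 - h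
  else 1/x - (1 - x) * (1 - Real.sqrt (1 - 4*h*x)) / (2*h*x^2)

noncomputable def phiAux (q v : ℝ) : ℝ :=
  (((1-q) - v*(1+q)) * ((1+q) - v*(1-q))) / ((1-q)*(1+q)*(1-v)^2)

lemma phiAux_eq (q s : ℝ) (hq0 : 0 < q) (hq1 : q < 1) (hs : q < s) :
    phiAux q ((s - q)/(s + q)) = (1 - s^2)/(1 - q^2) := by
  have e1 : (1:ℝ) - q ≠ 0 := by linarith
  have e2 : (1:ℝ) + q ≠ 0 := by linarith
  have e3 : s + q ≠ 0 := by intro hc; nlinarith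
  have e4 : (1:ℝ) - q^2 ≠ 0 := by nlinarith
  have e5 : (1:ℝ) - (s-q)/(s+q) ≠ 0 := by
    rw [sub_ne_zero]
    intro hc
    rw [eq_comm, div_eq_one_iff_eq e3] at hc
    nlinarith
  have e0 : q ≠ 0 := ne_of_gt hq0
  have e6 : s + q - (s - q) ≠ 0 := by intro hc; linarith
  unfold phiAux
  field_simp
  ring

lemma clear_aux (X R S c : ℝ) (hX : X ≠ 0) (hc : c ≠ 0)
    (h : X*c - (1-X)*(1-S) = R*X^2*c) : 1/X - (1-X)*(1-S)/(c*X^2) = R := by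
  rw [div_sub_div _ _ hX (by positivity), div_eq_iff (by positivity)]
  linear_combination X*h

lemma gGen_phiAux (h q v : ℝ) (hq0 : 0 < q) (hq1 : q < 1) (hq2 : q^2 = 1 - 4*h)
    (hv0 : 0 < v) (hv1 : v < 1) :
    gGen h (phiAux q v) = phiAux q ((1-q)/(1+q)*v) := by
  have hdef : h = (1-q^2)/4 := by linarith
  subst hdef
  have e1 : (1:ℝ) - q ≠ 0 := by linarith
  have e2 : (1:ℝ) + q ≠ 0 := by linarith
  have e3 : (1:ℝ) - v ≠ 0 := by linarith
  have e5 : (0:ℝ) < (1+q) - v*(1-q) := by nlinarith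
  by_cases hvr : (1-q) - v*(1+q) = 0
  · -- v = (1-q)/(1+q)
    have hv : v = (1-q)/(1+q) := by
      rw [eq_div_iff e2]; linarith
    have hphi0 : phiAux q v = 0 := by unfold phiAux; rw [hvr]; simp
    rw [hphi0, hv]
    have hlhs : gGen ((1-q^2)/4) 0 = (3+q^2)/4 := by
      rw [gGen, if_pos rfl]; ring
    rw [hlhs]
    have hv'1 : (1-q)/(1+q)*((1-q)/(1+q)) < 1 := by
      have h1 : (0:ℝ) < (1-q)/(1+q) := div_pos (by linarith) (by linarith)
      have h2 : (1-q)/(1+q) < 1 := by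
        rw [div_lt_one (by linarith)]; linarith
      nlinarith
    have hden : (0:ℝ) < (1-q)*(1+q)*(1-(1-q)/(1+q)*((1-q)/(1+q)))^2 := by
      have : (0:ℝ) < 1 - (1-q)/(1+q)*((1-q)/(1+q)) := by linarith
      have h1q : (0:ℝ) < 1 - q := by linarith
      have h2q : (0:ℝ) < 1 + q := by linarith
      positivity
    rw [phiAux, eq_comm, div_eq_iff (ne_of_gt hden)]
    field_simp
    ring
  · have hX : phiAux q v ≠ 0 := by
      unfold phiAux
      exact div_ne_zero (mul_ne_zero hvr (ne_of_gt e5))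
        (mul_ne_zero (mul_ne_zero e1 e2) (pow_ne_zero 2 e3))
    have hsq : 1 - 4*((1-q^2)/4)*(phiAux q v) = (q*(1+v)/(1-v))^2 := by
      unfold phiAux
      field_simp
      ring
    have hS : Real.sqrt (1 - 4*((1-q^2)/4)*(phiAux q v)) = q*(1+v)/(1-v) := by
      rw [hsq]
      exact Real.sqrt_sq (div_nonneg (by positivity) (by linarith))
    rw [gGen, if_neg hX, hS]
    have e5a : (1:ℝ)+q - (1-q)*v ≠ 0 := by intro hc; nlinarith
    have e5b : (1:ℝ)+q - v*(1-q) ≠ 0 := ne_of_gt e5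
    apply clear_aux _ _ _ _ hX (by intro hc; nlinarith)
    unfold phiAux
    field_simp
    ring

lemma hasDeriv_aux (h q r : ℝ) (hq0 : 0 < q) (hq1 : q < 1) (hq2 : q^2 = 1-4*h)
    (hr : r = (1-q)/(1+q)) (t : ℝ) (ht0 : 0 < t) (ht1 : t ≤ 1) :
    HasDerivAt (fun y => phiAux q
        (t * ((Real.sqrt (1-4*h*y) - q)/(Real.sqrt (1-4*h*y) + q))))
      (q*t*(1-r)^2*(1+r*t)/(1-r*t)^3) 0 := by
  have hdef : h = (1-q^2)/4 := by linarith
  subst hdef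
  have e1 : (0:ℝ) < 1 - q := by linarith
  have e2 : (0:ℝ) < 1 + q := by linarith
  have hs0 : Real.sqrt (1-4*((1-q^2)/4)*0) = 1 := by
    rw [show (1:ℝ)-4*((1-q^2)/4)*0 = 1 by ring, Real.sqrt_one]
  have hr0 : 0 < r := by rw [hr]; exact div_pos e1 e2
  have hr1 : r < 1 := by rw [hr, div_lt_one e2]; linarith
  have hrt1 : t*r < 1 := by nlinarith
  have hinner : HasDerivAt (fun y : ℝ => 1-4*((1-q^2)/4)*y) (-(4*((1-q^2)/4)*1)) 0 :=
    ((hasDerivAt_id 0).const_mul (4*((1-q^2)/4))).const_sub 1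
  have hsq : HasDerivAt (fun y : ℝ => Real.sqrt (1-4*((1-q^2)/4)*y))
      ((-(4*((1-q^2)/4)*1)) / (2*Real.sqrt (1-4*((1-q^2)/4)*0))) 0 :=
    hinner.sqrt (by norm_num)
  have hden0 : Real.sqrt (1-4*((1-q^2)/4)*0) + q ≠ 0 := by
    rw [hs0]; linarith
  have hu : HasDerivAt (fun y : ℝ => (Real.sqrt (1-4*((1-q^2)/4)*y) - q)/(Real.sqrt (1-4*((1-q^2)/4)*y) + q))
      ((((-(4*((1-q^2)/4)*1)) / (2*Real.sqrt (1-4*((1-q^2)/4)*0))) * (Real.sqrt (1-4*((1-q^2)/4)*0) + q)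
        - (Real.sqrt (1-4*((1-q^2)/4)*0) - q) * (((-(4*((1-q^2)/4)*1)) / (2*Real.sqrt (1-4*((1-q^2)/4)*0)))))
        / (Real.sqrt (1-4*((1-q^2)/4)*0) + q)^2) 0 :=
    (hsq.sub_const q).div (hsq.add_const q) hden0
  have hw := hu.const_mul t
  set u' := (((-(4*((1-q^2)/4)*1)) / (2*Real.sqrt (1-4*((1-q^2)/4)*0))) * (Real.sqrt (1-4*((1-q^2)/4)*0) + q)
        - (Real.sqrt (1-4*((1-q^2)/4)*0) - q) * (((-(4*((1-q^2)/4)*1)) / (2*Real.sqrt (1-4*((1-q^2)/4)*0)))))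
        / (Real.sqrt (1-4*((1-q^2)/4)*0) + q)^2 with hu'def
  set w := fun y : ℝ => t * ((Real.sqrt (1-4*((1-q^2)/4)*y) - q)/(Real.sqrt (1-4*((1-q^2)/4)*y) + q)) with hwdef
  have hw0 : w 0 = t*r := by
    rw [hwdef]; simp only []; rw [hs0, hr]
  have hA : HasDerivAt (fun y => (1-q) - w y*(1+q)) (-(t*u'*(1+q))) 0 :=
    (hw.mul_const (1+q)).const_sub (1-q)
  have hB : HasDerivAt (fun y => (1+q) - w y*(1-q)) (-(t*u'*(1-q))) 0 :=
    (hw.mul_const (1-q)).const_sub (1+q)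
  have hAB := hA.mul hB
  have h1w : HasDerivAt (fun y => 1 - w y) (-(t*u')) 0 := hw.const_sub 1
  have hpow := h1w.pow 2
  have hC := hpow.const_mul ((1-q)*(1+q))
  have hCne : (1-q)*(1+q)*((1 - w 0)^2) ≠ 0 := by
    rw [hw0]
    have : (0:ℝ) < 1 - t*r := by linarith
    positivity
  have hF := hAB.div hC hCne
  have : (fun y => phiAux q (w y)) =
      fun y => ((1-q) - w y*(1+q)) * ((1+q) - w y*(1-q)) / ((1-q)*(1+q)*(1 - w y)^2) := by
    funext y; rw [phiAux]
  rw [this]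
  convert hF using 1
  · rfl
  · rfl
  · rfl
  rw [hw0, hu'def, hs0, hr]
  norm_num
  rw [hw0, hr]
  have hrq : (1:ℝ)-q = r*(1+q) := by rw [hr]; field_simp
  have h5 : t*(1-q) < 1+q := by nlinarith [hrt1, e2]
  have e4 : (1:ℝ)+q - t*(1-q) ≠ 0 := by intro hc; nlinarith
  have e4' : (1:ℝ)+q - (1-q)*t ≠ 0 := by intro hc; nlinarith
  field_simp
  ring

lemma ratio_eq (q r t u : ℝ) (hq0 : 0 < q) (hr0 : 0 < r) (hr1 : r < 1)
    (ht0 : 0 < t) (ht1 : t ≤ 1) (hu0 : 0 < u) (hu1 : u < 1)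
    (hrq : q = (1-r)/(1+r)) :
    (phiAux q (t*u) - phiAux q (t*r)) / (q*t*(1-r)^2*(1+r*t)/(1-r*t)^3)
      = ((u-r)*(1-u*r*t^2)*(1-r*t)^3)/((-(q*r))*(1-t*u)^2*(1-t*r)^2*(1+r*t)) := by
  subst hrq
  have e1 : (0:ℝ) < 1 - r := by linarith
  have e2 : (0:ℝ) < 1 + r := by linarith
  have etu : (0:ℝ) < 1 - t*u := by nlinarith
  have etr : (0:ℝ) < 1 - t*r := by nlinarith
  have ert : (0:ℝ) < 1 - r*t := by nlinarith
  have ert2 : (0:ℝ) < 1 + r*t := by positivity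
  have eq0 : (0:ℝ) < (1-r)/(1+r) := div_pos e1 e2
  unfold phiAux
  have d1 : (1:ℝ) - (1-r)/(1+r) ≠ 0 := by
    intro hc; rw [sub_eq_zero, eq_comm, div_eq_one_iff_eq (ne_of_gt e2)] at hc; linarith
  have d2 : (1:ℝ) + (1-r)/(1+r) ≠ 0 := by positivity
  have e0 : r ≠ 0 := ne_of_gt hr0
  have e7 : (1:ℝ) + r - (1 - r) ≠ 0 := by intro hc; linarith
  field_simp
  ring

lemma val_eq (q s : ℝ) (hq0 : 0 < q) (hq1 : q < 1) (hsq : q < s) :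
    ((s-q)/(s+q) - (1-q)/(1+q))/(-(q*((1-q)/(1+q))))
      = (1/q)*(1 - (1 - (1-s^2)/(1-q^2))*((q+1)/(q+s))^2) := by
  have e1 : (0:ℝ) < 1 - q := by linarith
  have e2 : (0:ℝ) < 1 + q := by linarith
  have e3 : (0:ℝ) < s + q := by linarith
  have e4 : (0:ℝ) < q + s := by linarith
  have e5 : (1:ℝ) - q^2 ≠ 0 := by nlinarith
  field_simp
  ring

/-- for `0 < h < 1/4`, the limit
`Π(x) = lim_n (g^{∘n}(x) - g^{∘n}(0))/(g^{∘n})'(0)` exists for `x ∈ [0,1)` and equals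
`(1/√(1-4h)) (1 - (1-x)((√(1-4h)+1)/(√(1-4h)+√(1-4hx)))²)`. -/
theorem stmt_9 (h : ℝ) (hh : 0 < h) (hh4 : h < 1/4)
    (d : ℕ → ℝ) (hd : ∀ n : ℕ, HasDerivAt ((gGen h)^[n]) (d n) 0) :
    ∀ x ∈ Set.Ico (0 : ℝ) 1,
      Filter.Tendsto (fun n : ℕ => ((gGen h)^[n] x - (gGen h)^[n] 0) / d n)
        Filter.atTop
        (nhds ((1 / Real.sqrt (1 - 4*h)) *
          (1 - (1 - x) * ((Real.sqrt (1 - 4*h) + 1) /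
            (Real.sqrt (1 - 4*h) + Real.sqrt (1 - 4*h*x)))^2))) := by
  intro x hx
  obtain ⟨hx0, hx1⟩ := hx
  have h4 : (0:ℝ) < 1 - 4*h := by linarith
  set q := Real.sqrt (1-4*h) with hqdef
  have hq2 : q^2 = 1-4*h := Real.sq_sqrt h4.le
  have hq0 : 0 < q := Real.sqrt_pos.mpr h4
  have hq1 : q < 1 := by nlinarith
  have e1 : (0:ℝ) < 1-q := by linarith
  have e2 : (0:ℝ) < 1+q := by linarith
  set r := (1-q)/(1+q) with hrdef
  have hr0 : 0 < r := by rw [hrdef]; exact div_pos e1 e2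
  have hr1 : r < 1 := by rw [hrdef, div_lt_one e2]; linarith
  have hqr : q = (1-r)/(1+r) := by
    rw [eq_div_iff (by linarith : (1:ℝ)+r ≠ 0), hrdef]
    field_simp
    ring
  have h4x : (0:ℝ) < 1 - 4*h*x := by nlinarith
  set s := Real.sqrt (1-4*h*x) with hsdef
  have hs2 : s^2 = 1-4*h*x := Real.sq_sqrt h4x.le
  have hsq : q < s := by
    rw [hqdef, hsdef]; exact Real.sqrt_lt_sqrt h4.le (by nlinarith)
  have hs0 : 0 < s := lt_trans hq0 hsq
  set u := (s-q)/(s+q) with hudef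
  have hu0 : 0 < u := by rw [hudef]; exact div_pos (by linarith) (by linarith)
  have hu1 : u < 1 := by rw [hudef, div_lt_one (by linarith)]; linarith
  -- iteration formula
  have key : ∀ n : ℕ, ∀ y : ℝ, y < 1 → (gGen h)^[n] y
      = phiAux q (r^n * ((Real.sqrt (1-4*h*y) - q)/(Real.sqrt (1-4*h*y) + q))) := by
    intro n
    induction n with
    | zero =>
      intro y hy
      have hy4 : (0:ℝ) < 1-4*h*y := by nlinarith
      have hysq : q < Real.sqrt (1-4*h*y) := by
        rw [hqdef]; exact Real.sqrt_lt_sqrt h4.le (by nlinarith)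
      simp only [Function.iterate_zero, id_eq, pow_zero, one_mul]
      rw [phiAux_eq q _ hq0 hq1 hysq, Real.sq_sqrt hy4.le, hq2]
      rw [show (1:ℝ)-(1-4*h*y) = 4*h*y by ring, show (1:ℝ)-(1-4*h) = 4*h by ring]
      rw [mul_comm (4*h) y, mul_div_assoc, div_self (by positivity), mul_one]
    | succ n ih =>
      intro y hy
      have hy4 : (0:ℝ) < 1-4*h*y := by nlinarith
      have hysq : q < Real.sqrt (1-4*h*y) := by
        rw [hqdef]; exact Real.sqrt_lt_sqrt h4.le (by nlinarith)
      have huy0 : 0 < (Real.sqrt (1-4*h*y) - q)/(Real.sqrt (1-4*h*y) + q) :=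
        div_pos (by linarith) (by linarith)
      have huy1 : (Real.sqrt (1-4*h*y) - q)/(Real.sqrt (1-4*h*y) + q) < 1 := by
        rw [div_lt_one (by linarith)]; linarith
      have hv0 : 0 < r^n * ((Real.sqrt (1-4*h*y) - q)/(Real.sqrt (1-4*h*y) + q)) :=
        mul_pos (pow_pos hr0 n) huy0
      have hv1 : r^n * ((Real.sqrt (1-4*h*y) - q)/(Real.sqrt (1-4*h*y) + q)) < 1 := by
        have hp1 : r^n ≤ 1 := pow_le_one₀ hr0.le hr1.le
        nlinarith
      rw [Function.iterate_succ_apply', ih y hy,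
        gGen_phiAux h q _ hq0 hq1 hq2 hv0 hv1, ← hrdef]
      congr 1
      rw [pow_succ]; ring
  -- derivative values
  have hEd : ∀ n : ℕ, d n = q*(r^n)*(1-r)^2*(1+r*(r^n))/(1-r*(r^n))^3 := by
    intro n
    have hF := hasDeriv_aux h q r hq0 hq1 hq2 hrdef (r^n) (pow_pos hr0 n)
      (pow_le_one₀ hr0.le hr1.le)
    have ev : (gGen h)^[n] =ᶠ[nhds 0] (fun y => phiAux q ((r^n) *
        ((Real.sqrt (1-4*h*y) - q)/(Real.sqrt (1-4*h*y) + q)))) := by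
      filter_upwards [Iio_mem_nhds (show (0:ℝ) < 1 by norm_num)] with y hy
      exact key n y hy
    exact (hd n).unique (hF.congr_of_eventuallyEq ev)
  -- sequence closed form
  have hseq : ∀ n : ℕ, ((gGen h)^[n] x - (gGen h)^[n] 0)/d n
      = ((u-r)*(1-u*r*(r^n)^2)*(1-r*(r^n))^3)
        /((-(q*r))*(1-(r^n)*u)^2*(1-(r^n)*r)^2*(1+r*(r^n))) := by
    intro n
    have h0s : Real.sqrt (1-4*h*0) = 1 := by
      rw [show (1:ℝ)-4*h*0 = 1 by ring, Real.sqrt_one]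
    have h0 : (gGen h)^[n] 0 = phiAux q (r^n * r) := by
      rw [key n 0 (by norm_num), h0s, ← hrdef]
    rw [key n x hx1, ← hsdef, ← hudef, h0, hEd n]
    exact ratio_eq q r (r^n) u hq0 hr0 hr1 (pow_pos hr0 n)
      (pow_le_one₀ hr0.le hr1.le) hu0 hu1 hqr
  -- limit
  have tpow : Filter.Tendsto (fun n : ℕ => r^n) Filter.atTop (nhds 0) :=
    tendsto_pow_atTop_nhds_zero_of_lt_one hr0.le hr1
  have hcont : ContinuousAt (fun tt : ℝ => ((u-r)*(1-u*r*tt^2)*(1-r*tt)^3)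
      /((-(q*r))*(1-tt*u)^2*(1-tt*r)^2*(1+r*tt))) 0 := by
    apply ContinuousAt.div
    · fun_prop
    · fun_prop
    · simp only [zero_mul, mul_zero, sub_zero, add_zero, one_pow, mul_one]
      exact neg_ne_zero.mpr (mul_pos hq0 hr0).ne'
  have hlim := hcont.tendsto.comp tpow
  have hval : ((u-r)*(1-u*r*(0:ℝ)^2)*(1-r*(0:ℝ))^3)
      /((-(q*r))*(1-(0:ℝ)*u)^2*(1-(0:ℝ)*r)^2*(1+r*(0:ℝ)))
      = (1/q)*(1 - (1-x)*((q+1)/(q+s))^2) := by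
    have hxe : x = (1-s^2)/(1-q^2) := by
      rw [hs2, hq2, show (1:ℝ)-(1-4*h*x) = 4*h*x by ring,
        show (1:ℝ)-(1-4*h) = 4*h by ring, mul_comm (4*h) x, mul_div_assoc,
        div_self (by positivity), mul_one]
    rw [hxe, hudef, hrdef, ← val_eq q s hq0 hq1 hsq]
    norm_num
  refine Filter.Tendsto.congr (fun n => (hseq n).symm) ?_
  rw [hval] at hlim
  exact hlim
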